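/- Let A, Q : ℝ → Matrix (Fin n) (Fin n) ℝ and B : ℝ → Matrix (Fin n) (Fin m) ℝ. Suppose on an open set U ⊆ ℝ: (a) Π : ℝ → Matrix (Fin n) (Fin n) ℝ is symmetric-valued and satisfies HasDerivAt Π (−(A(t)ᵀΠ(t) + Π(t)A(t) − Π(t)B(t)B(t)ᵀΠ(t) + Q(t))) t for all t ∈ U; (b) Σ : ℝ → Matrix (Fin n) (Fin n) ℝ is symmetric-valued, invertible for all t ∈ U, and satisfies the closed-loop Lyapunov equation HasDerivAt Σ ((A(t) − B(t)B(t)ᵀΠ(t))·Σ(t) + Σ(t)·(A(t) − B(t)B(t)ᵀΠ(t))ᵀ + B(t)B(t)ᵀ) t for all t ∈ U. Then H(t) := Σ(t)⁻¹ − Π(t) satisfies, for every t ∈ U, HasDerivAt H (−(A(t)ᵀH(t) + H(t)A(t) + H(t)B(t)B(t)ᵀH(t) − Q(t))) t. -/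

import Mathlib

open Matrix

attribute [instance] Matrix.normedAddCommGroup Matrix.normedSpace

section helpers

/-- Matrix multiplication as a continuous bilinear map. -/
noncomputable def mulCLM (p q r : ℕ) :
    Matrix (Fin p) (Fin q) ℝ →L[ℝ] Matrix (Fin q) (Fin r) ℝ →L[ℝ] Matrix (Fin p) (Fin r) ℝ :=
  LinearMap.toContinuousLinearMap
  { toFun := fun X => LinearMap.toContinuousLinearMap
      { toFun := fun Y => X * Y
        map_add' := fun Y Z => Matrix.mul_add X Y Z
        map_smul' := fun c Y => Matrix.mul_smul X c Y }
    map_add' := fun X Y => by ext Z; simp [Matrix.add_mul]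
    map_smul' := fun c X => by ext Z; simp [Matrix.smul_mul] }

@[simp] lemma mulCLM_apply {p q r : ℕ} (X : Matrix (Fin p) (Fin q) ℝ)
    (Y : Matrix (Fin q) (Fin r) ℝ) : mulCLM p q r X Y = X * Y := rfl

/-- Product rule for matrix-valued functions of a real variable. -/
theorem HasDerivAt.matMul {p q r : ℕ} {t : ℝ}
    {f : ℝ → Matrix (Fin p) (Fin q) ℝ} {g : ℝ → Matrix (Fin q) (Fin r) ℝ}
    {f' : Matrix (Fin p) (Fin q) ℝ} {g' : Matrix (Fin q) (Fin r) ℝ}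
    (hf : HasDerivAt f f' t) (hg : HasDerivAt g g' t) :
    HasDerivAt (fun s => f s * g s) (f' * g t + f t * g') t := by
  have hb := ((mulCLM p q r).isBoundedBilinearMap.hasFDerivAt
    (f t, g t)).comp_hasDerivAt t (hf.prodMk hg)
  convert hb using 1
  · rfl
  · rfl
  · rfl
  · rfl
  exact (add_comm (f' * g t) (f t * g')).trans rfl

theorem HasDerivAt.entry {p q : ℕ} {t : ℝ} {f : ℝ → Matrix (Fin p) (Fin q) ℝ}
    {f' : Matrix (Fin p) (Fin q) ℝ} (hf : HasDerivAt f f' t) (i : Fin p) (j : Fin q) :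
    HasDerivAt (fun s => f s i j) (f' i j) t := by
  have e := (LinearMap.toContinuousLinearMap
    (Matrix.entryLinearMap ℝ ℝ i j)).hasFDerivAt (x := f t)
  exact e.comp_hasDerivAt t hf

theorem differentiableAt_matrix_det {p : ℕ} {t : ℝ} {M : ℝ → Matrix (Fin p) (Fin p) ℝ}
    (h : ∀ i j, DifferentiableAt ℝ (fun s => M s i j) t) :
    DifferentiableAt ℝ (fun s => (M s).det) t := by
  simp only [Matrix.det_apply']
  exact DifferentiableAt.fun_sum fun σ _ => (differentiableAt_const _).mul
    (DifferentiableAt.fun_finsetProd fun i _ => h (σ i) i)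

theorem differentiableAt_matrix_inv {p : ℕ} {t : ℝ} {M : ℝ → Matrix (Fin p) (Fin p) ℝ}
    (h : ∀ i j, DifferentiableAt ℝ (fun s => M s i j) t) (hdet : (M t).det ≠ 0) :
    DifferentiableAt ℝ (fun s => (M s)⁻¹) t := by
  have hdetd : DifferentiableAt ℝ (fun s => (M s).det) t := differentiableAt_matrix_det h
  have hadj : ∀ i j, DifferentiableAt ℝ (fun s => (M s).adjugate i j) t := by
    intro i j
    simp only [Matrix.adjugate_apply]
    apply differentiableAt_matrix_det
    intro k l
    simp only [Matrix.updateRow_apply]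
    by_cases hk : k = j
    · simp [hk]
    · simp only [hk, if_false]; exact h k l
  have hadjm : DifferentiableAt ℝ (fun s => (M s).adjugate) t := by
    refine differentiableAt_pi.mpr ?_
    intro i
    rw [differentiableAt_pi]
    intro j
    exact hadj i j
  have hmain : DifferentiableAt ℝ (fun s => ((M s).det)⁻¹ • (M s).adjugate) t :=
    (hdetd.inv hdet).smul hadjm
  have heq : (fun s => (M s)⁻¹) = fun s => ((M s).det)⁻¹ • (M s).adjugate := by
    funext s
    rw [Matrix.inv_def, Ring.inverse_eq_inv']
  rw [heq]
  exact hmain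

end helpers

/-- if `Π` solves the control Riccati equation and `Σ` solves the
closed-loop Lyapunov equation on an open set `U`, with `Σ(t)` symmetric and invertible,
then `H := Σ⁻¹ − Π` solves the Riccati equation `−Ḣ = AᵀH + HA + HBBᵀH − Q` on `U`. -/
theorem riccati_H_of_lyapunov {n m : ℕ}
    (A Q : ℝ → Matrix (Fin n) (Fin n) ℝ) (B : ℝ → Matrix (Fin n) (Fin m) ℝ)
    (P S : ℝ → Matrix (Fin n) (Fin n) ℝ)
    (U : Set ℝ) (hU : IsOpen U)
    (hPsymm : ∀ t ∈ U, (P t)ᵀ = P t)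
    (hP : ∀ t ∈ U, HasDerivAt P
      (-((A t)ᵀ * P t + P t * A t - P t * (B t * (B t)ᵀ) * P t + Q t)) t)
    (hSsymm : ∀ t ∈ U, (S t)ᵀ = S t)
    (hSinv : ∀ t ∈ U, IsUnit (S t))
    (hS : ∀ t ∈ U, HasDerivAt S
      ((A t - B t * (B t)ᵀ * P t) * S t + S t * (A t - B t * (B t)ᵀ * P t)ᵀ
        + B t * (B t)ᵀ) t) :
    ∀ t ∈ U, HasDerivAt (fun t => (S t)⁻¹ - P t)
      (-((A t)ᵀ * ((S t)⁻¹ - P t) + ((S t)⁻¹ - P t) * A t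
        + ((S t)⁻¹ - P t) * (B t * (B t)ᵀ) * ((S t)⁻¹ - P t) - Q t)) t := by
  intro t ht
  set S' : Matrix (Fin n) (Fin n) ℝ :=
    (A t - B t * (B t)ᵀ * P t) * S t + S t * (A t - B t * (B t)ᵀ * P t)ᵀ + B t * (B t)ᵀ with hS'
  set K : Matrix (Fin n) (Fin n) ℝ := (S t)⁻¹ with hKdef
  -- invertibility facts
  have hdet : IsUnit (S t).det := (Matrix.isUnit_iff_isUnit_det (S t)).mp (hSinv t ht)
  have hKS : K * S t = 1 := Matrix.nonsing_inv_mul (S t) hdet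
  have hSK : S t * K = 1 := Matrix.mul_nonsing_inv (S t) hdet
  -- differentiability of the inverse
  have hdiffK : DifferentiableAt ℝ (fun s => (S s)⁻¹) t := by
    apply differentiableAt_matrix_inv
    · intro i j
      exact ((hS t ht).entry i j).differentiableAt
    · exact hdet.ne_zero
  obtain ⟨K', hK⟩ : ∃ K', HasDerivAt (fun s => (S s)⁻¹) K' t :=
    ⟨_, hdiffK.hasDerivAt⟩
  -- the function  s ↦ S s * (S s)⁻¹  is locally 1 on U
  have hSmulK : HasDerivAt (fun s => S s * (S s)⁻¹) (S' * K + S t * K') t :=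
    (hS t ht).matMul hK
  have hloc : (fun s => S s * (S s)⁻¹) =ᶠ[nhds t] fun _ => (1 : Matrix (Fin n) (Fin n) ℝ) := by
    filter_upwards [hU.mem_nhds ht] with s hs
    exact Matrix.mul_nonsing_inv (S s) ((Matrix.isUnit_iff_isUnit_det (S s)).mp (hSinv s hs))
  have hzero : HasDerivAt (fun s => S s * (S s)⁻¹) 0 t :=
    (hasDerivAt_const t (1 : Matrix (Fin n) (Fin n) ℝ)).congr_of_eventuallyEq hloc
  have huniq : S' * K + S t * K' = 0 := hSmulK.unique hzero
  -- solve for K'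
  have hK' : K' = -(K * S' * K) := by
    have h1 : K * (S' * K + S t * K') = 0 := by rw [huniq, mul_zero]
    have h2 : K * (S' * K) + K' = 0 := by
      calc K * (S' * K) + K' = K * (S' * K) + (K * S t) * K' := by rw [hKS, one_mul]
        _ = K * (S' * K + S t * K') := by rw [mul_add, mul_assoc]
        _ = 0 := h1
    have := eq_neg_of_add_eq_zero_right h2
    rw [this, mul_assoc]
  -- final assembly
  have hfinal : HasDerivAt (fun s => (S s)⁻¹ - P s)
      (K' - -((A t)ᵀ * P t + P t * A t - P t * (B t * (B t)ᵀ) * P t + Q t)) t :=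
    hK.sub (hP t ht)
  convert hfinal using 1
  rw [hK', hS']
  set G : Matrix (Fin n) (Fin n) ℝ := B t * (B t)ᵀ with hG
  have hGsymm : Gᵀ = G := by rw [hG, Matrix.transpose_mul, Matrix.transpose_transpose]
  have hT : (A t - G * P t)ᵀ = (A t)ᵀ - P t * G := by
    rw [Matrix.transpose_sub, Matrix.transpose_mul, hGsymm, hPsymm t ht]
  rw [hT]
  -- expand K * (…) * K using hKS and hSK
  have hexp : K * ((A t - G * P t) * S t + S t * ((A t)ᵀ - P t * G) + G) * K
      = K * (A t - G * P t) + ((A t)ᵀ - P t * G) * K + K * G * K := by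
    calc K * ((A t - G * P t) * S t + S t * ((A t)ᵀ - P t * G) + G) * K
        = K * (A t - G * P t) * (S t * K) + (K * S t) * ((A t)ᵀ - P t * G) * K
          + K * G * K := by noncomm_ring
      _ = K * (A t - G * P t) + ((A t)ᵀ - P t * G) * K + K * G * K := by
          rw [hKS, hSK]; noncomm_ring
  rw [hexp]
  noncomm_ring
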